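/- arXiv:1311.1916 — 8 statements merged into one kernel-verified Lean document; each statement's English description precedes it below -/
import Mathlib

section
/- Let A be a set with a binary operation s and element 0, and let n ≥ 2. Suppose there are binary operations s₁, …, s_{n-1} built from the algebra's operations satisfying s₁(x,x) = 0, sᵢ(x,0) = s_{i+1}(x,x) for 1 ≤ i ≤ n−2, and s_{n-1}(x,0) = x. Then for every compatible preorder ≤ on A and every a ∈ A: a ≤ 0 implies 0 ≤ a, and 0 ≤ a implies a ≤ 0. In particular, with respect to any compatible partial order, no element a ≠ 0 is comparable with 0. -/
/-- In an `n`-subtractive algebra, every compatible preorder is `0`-symmetric: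
`a ≤ 0 ↔ 0 ≤ a`. -/
theorem n_subtractive_zero_symmetric {A : Type*} (n : ℕ) (hn : 2 ≤ n)
    (s : ℕ → A → A → A) (z : A)
    (h1 : ∀ x, s 1 x x = z)
    (h2 : ∀ i, 1 ≤ i → i ≤ n - 2 → ∀ x, s i x z = s (i + 1) x x)
    (h3 : ∀ x, s (n - 1) x z = x)
    (le : A → A → Prop)
    (hrefl : ∀ a, le a a)
    (htrans : ∀ a b c, le a b → le b c → le a c)
    (hmono : ∀ i, 1 ≤ i → i ≤ n - 1 →
      ∀ a b a' b', le a b → le a' b' → le (s i a a') (s i b b'))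
    (a : A) :
    (le a z → le z a) ∧ (le z a → le a z) := by
  constructor
  · intro ha
    have key : ∀ i, 1 ≤ i → i ≤ n - 1 → le z (s i a a) := by
      intro i hi1
      induction i, hi1 using Nat.le_induction with
      | base => intro _; rw [h1]; exact hrefl z
      | succ i hi ih =>
        intro hle
        have hi2 : i ≤ n - 2 := by omega
        have hin : i ≤ n - 1 := by omega
        have := hmono i hi hin a a a z (hrefl a) ha
        rw [h2 i hi hi2 a] at this
        exact htrans _ _ _ (ih hin) this
    have := hmono (n - 1) (by omega) le_rfl a a a z (hrefl a) ha
    rw [h3 a] at this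
    exact htrans _ _ _ (key (n - 1) (by omega) le_rfl) this
  · intro ha
    have key : ∀ i, 1 ≤ i → i ≤ n - 1 → le (s i a a) z := by
      intro i hi1
      induction i, hi1 using Nat.le_induction with
      | base => intro _; rw [h1]; exact hrefl z
      | succ i hi ih =>
        intro hle
        have hi2 : i ≤ n - 2 := by omega
        have hin : i ≤ n - 1 := by omega
        have := hmono i hi hin a a z a (hrefl a) ha
        rw [h2 i hi hi2 a] at this
        exact htrans _ _ _ this (ih hin)
    have := hmono (n - 1) (by omega) le_rfl a a z a (hrefl a) ha
    rw [h3 a] at this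
    exact htrans _ _ _ this (key (n - 1) (by omega) le_rfl)
end

section
/- Let A be a subtractive algebra (with binary operation s and constant 0 satisfying s(x,x) = 0 and s(x,0) = x) equipped with a T0 topology for which s is separately continuous. Then the singleton set {0} is closed in A. -/
/-- In a subtractive T0 semitopological algebra, the singleton `{0}` is closed. -/
theorem subtractive_zero_closed {A : Type*} [TopologicalSpace A] [T0Space A]
    (s : A → A → A) (z : A)
    (h1 : ∀ x, s x x = z) (h2 : ∀ x, s x z = x)
    (hc1 : ∀ a : A, Continuous (s a))
    (hc2 : ∀ a : A, Continuous (fun x => s x a)) :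
    IsClosed ({z} : Set A) := by
  rw [← closure_subset_iff_isClosed]
  intro y hy
  have hz : z ∈ closure ({y} : Set A) := by
    have hmap : Set.MapsTo (s y) ({z} : Set A) ({y} : Set A) := by
      intro x hx
      simp only [Set.mem_singleton_iff] at hx ⊢
      rw [hx, h2]
    have := map_mem_closure (hc1 y) hy hmap
    rwa [h1] at this
  have : Inseparable y z := by
    rw [inseparable_iff_specializes_and]
    constructor
    · exact specializes_iff_mem_closure.mpr hz
    · exact specializes_iff_mem_closure.mpr hy
  simpa using this.eq
end

section
/- Let (A, τ) be a T0 topological space and s : A × A → A a continuous binary operation satisfying s(x,x) = 0 and s(x,0) = x for all x ∈ A (a 2-subtractive topological algebra). Then for all a, b ∈ A with s(a,b) ≠ 0, the points a and b are T_{2½}-separated (they have open neighbourhoods with disjoint closures). In particular, every a ≠ 0 is T_{2½}-separated from 0. -/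
/-- Auxiliary: the pairwise separation statement. -/
theorem two_subtractive_t2half_aux {A : Type*} [TopologicalSpace A] [T0Space A]
    (s : A → A → A) (z : A)
    (hc : Continuous fun p : A × A => s p.1 p.2)
    (h1 : ∀ x, s x x = z) (h2 : ∀ x, s x z = x) :
    ∀ a b : A, s a b ≠ z →
      ∃ U V : Set A, IsOpen U ∧ IsOpen V ∧ a ∈ U ∧ b ∈ V ∧
        closure U ∩ closure V = ∅ := by
  -- Step 1: specialization to/from `z` is symmetric, hence trivial by T0.
  have key₁ : ∀ x : A, x ⤳ z → x = z := by
    intro x hx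
    have hp : (x, x) ⤳ (x, z) := (specializes_refl x).prod hx
    have := hp.map hc
    simp only [h1, h2] at this
    exact (hx.antisymm this).eq
  have key₂ : ∀ x : A, z ⤳ x → x = z := by
    intro x hx
    have hp : (x, z) ⤳ (x, x) := (specializes_refl x).prod hx
    have := hp.map hc
    simp only [h1, h2] at this
    exact (this.antisymm hx).eq
  -- `{z}` is closed.
  have hzc : IsClosed ({z} : Set A) := by
    rw [← closure_subset_iff_isClosed]
    intro x hx
    exact key₂ x (specializes_iff_mem_closure.2 hx)
  -- Step 2: T2 separation when `s a b ≠ z`.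
  have T2 : ∀ a b : A, s a b ≠ z → ∃ U V : Set A, IsOpen U ∧ IsOpen V ∧
      a ∈ U ∧ b ∈ V ∧ U ∩ V = ∅ := by
    intro a b hab
    have hopen : IsOpen ((fun p : A × A => s p.1 p.2) ⁻¹' ({z}ᶜ)) :=
      hc.isOpen_preimage _ hzc.isOpen_compl
    have hmem : (a, b) ∈ (fun p : A × A => s p.1 p.2) ⁻¹' ({z}ᶜ) := hab
    obtain ⟨U, V, hU, hV, haU, hbV, hUV⟩ := isOpen_prod_iff.1 hopen a b hmem
    refine ⟨U, V, hU, hV, haU, hbV, ?_⟩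
    ext x
    simp only [Set.mem_inter_iff, Set.mem_empty_iff_false, iff_false, not_and]
    intro hxU hxV
    have : (x, x) ∈ U ×ˢ V := ⟨hxU, hxV⟩
    have h := hUV this
    simp only [Set.mem_preimage, Set.mem_compl_iff, Set.mem_singleton_iff] at h
    exact h (h1 x)
  -- Step 3: the main argument.
  intro a b hab
  set c := s a b with hcdef
  -- separate `c` and `z` by disjoint opens
  obtain ⟨U₀, V₀, hU₀, hV₀, hcU₀, hzV₀, hU₀V₀⟩ := T2 c z (by rw [h2]; exact hab)
  -- hence `z ∉ closure U₀`
  have hzcl : z ∉ closure U₀ := by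
    intro hz
    obtain ⟨t, htV₀, htU₀⟩ := mem_closure_iff.1 hz V₀ hV₀ hzV₀
    exact absurd (Set.mem_inter htU₀ htV₀) (by rw [hU₀V₀]; exact Set.notMem_empty t)
  set O : Set A := (closure U₀)ᶜ with hOdef
  have hO : IsOpen O := isClosed_closure.isOpen_compl
  have hzO : z ∈ O := hzcl
  -- shrink: opens `U ∋ a`, `V ∋ b` with `s(U × V) ⊆ U₀`
  have hopen : IsOpen ((fun p : A × A => s p.1 p.2) ⁻¹' U₀) := hc.isOpen_preimage _ hU₀
  have hmem : (a, b) ∈ (fun p : A × A => s p.1 p.2) ⁻¹' U₀ := hcU₀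
  obtain ⟨U, V, hU, hV, haU, hbV, hUV⟩ := isOpen_prod_iff.1 hopen a b hmem
  refine ⟨U, V, hU, hV, haU, hbV, ?_⟩
  ext x
  simp only [Set.mem_inter_iff, Set.mem_empty_iff_false, iff_false, not_and]
  intro hxU hxV
  -- `s x x = z ∈ O`, get opens `P, Q ∋ x` with `s(P × Q) ⊆ O`
  have hopen' : IsOpen ((fun p : A × A => s p.1 p.2) ⁻¹' O) := hc.isOpen_preimage _ hO
  have hmem' : (x, x) ∈ (fun p : A × A => s p.1 p.2) ⁻¹' O := by
    simp only [Set.mem_preimage, h1]; exact hzO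
  obtain ⟨P, Q, hP, hQ, hxP, hxQ, hPQ⟩ := isOpen_prod_iff.1 hopen' x x hmem'
  obtain ⟨u, huP, huU⟩ := mem_closure_iff.1 hxU P hP hxP
  obtain ⟨v, hvQ, hvV⟩ := mem_closure_iff.1 hxV Q hQ hxQ
  have huv₁ : (u, v) ∈ P ×ˢ Q := ⟨huP, hvQ⟩
  have huv₂ : (u, v) ∈ U ×ˢ V := ⟨huU, hvV⟩
  have h₁ : s u v ∈ O := hPQ huv₁
  have h₂ : s u v ∈ U₀ := hUV huv₂
  exact h₁ (subset_closure h₂)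

/-- In a 2-subtractive T0 topological algebra, `s a b ≠ 0` implies that `a` and
`b` are T2½-separated; in particular every `a ≠ 0` is T2½-separated from `0`. -/
theorem two_subtractive_t2half {A : Type*} [TopologicalSpace A] [T0Space A]
    (s : A → A → A) (z : A)
    (hc : Continuous fun p : A × A => s p.1 p.2)
    (h1 : ∀ x, s x x = z) (h2 : ∀ x, s x z = x) :
    (∀ a b : A, s a b ≠ z →
      ∃ U V : Set A, IsOpen U ∧ IsOpen V ∧ a ∈ U ∧ b ∈ V ∧
        closure U ∩ closure V = ∅) ∧
    (∀ a : A, a ≠ z →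
      ∃ U V : Set A, IsOpen U ∧ IsOpen V ∧ a ∈ U ∧ z ∈ V ∧
        closure U ∩ closure V = ∅) := by
  refine ⟨two_subtractive_t2half_aux s z hc h1 h2, fun a ha => ?_⟩
  exact two_subtractive_t2half_aux s z hc h1 h2 a z (by rw [h2]; exact ha)
end

section
/- Let (A, τ) be a topological space with a separately continuous binary operation t : A × A → A, and let a, b ∈ A satisfy t(a,a) = t(b,b) and t(a,b) ≠ t(a,a). If t(a,b) and t(a,a) are T0-separated (some open set contains exactly one of them), then a and b are T1-separated: a has an open neighbourhood not containing b and b has an open neighbourhood not containing a. -/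
/-- If `t` is separately continuous, `t a a = t b b`, `t a b ≠ t a a`, and
`t a b` and `t a a` are T0-separated, then `a` and `b` are T1-separated. -/
theorem t0_to_t1_separation {A : Type*} [TopologicalSpace A]
    (t : A → A → A)
    (hc1 : ∀ c : A, Continuous (t c))
    (hc2 : ∀ c : A, Continuous (fun x => t x c))
    (a b : A)
    (hdiag : t a a = t b b)
    (hne : t a b ≠ t a a)
    (hT0 : ∃ U : Set A, IsOpen U ∧
      ((t a b ∈ U ∧ t a a ∉ U) ∨ (t a a ∈ U ∧ t a b ∉ U))) :
    (∃ U : Set A, IsOpen U ∧ a ∈ U ∧ b ∉ U) ∧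
    (∃ V : Set A, IsOpen V ∧ b ∈ V ∧ a ∉ V) := by
  obtain ⟨U, hU, h | h⟩ := hT0
  · refine ⟨⟨(fun x => t x b) ⁻¹' U, hU.preimage (hc2 b), h.1, ?_⟩,
      ⟨t a ⁻¹' U, hU.preimage (hc1 a), h.1, h.2⟩⟩
    simp only [Set.mem_preimage, ← hdiag]
    exact h.2
  · refine ⟨⟨t a ⁻¹' U, hU.preimage (hc1 a), h.1, h.2⟩,
      ⟨(fun x => t x b) ⁻¹' U, hU.preimage (hc2 b), ?_, h.2⟩⟩
    simp only [Set.mem_preimage, ← hdiag]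
    exact h.1
end

section
/- Let (A, τ) be an n-subtractive T0 topological algebra (all operations sᵢ jointly continuous, {0} closed and T1-separated from all other points). Then for every a ∈ A \ {0}, a ∈ Σ_{κ(a)}, i.e., there exist open sets U ∋ a and V ∋ 0 with U ∩ V ⊆ R_{κ(a)−1}, where κ(a) is the rank of a, Rⱼ is the set of nonzero elements of rank ≤ j, and R₀ = ∅. Consequently Σ_{n-1} = A \ {0}. -/
/-- The set of nonzero elements of rank at most `i` in an `n`-subtractive algebra. -/
def rankAtMost {A : Type*} (s : ℕ → A → A → A) (z : A) (i : ℕ) : Set A :=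
  {a | a ≠ z ∧ ∃ k, 1 ≤ k ∧ k ≤ i ∧ s k a z ≠ z ∧ ∀ j, 1 ≤ j → j < k → s j a z = z}

/-- `Σ i`: points separable from `0` modulo elements of rank `< i`. -/
def sigmaSet {A : Type*} [TopologicalSpace A] (s : ℕ → A → A → A) (z : A) (i : ℕ) : Set A :=
  {a | ∃ U V : Set A, IsOpen U ∧ IsOpen V ∧ a ∈ U ∧ z ∈ V ∧
    U ∩ V ⊆ rankAtMost s z (i - 1)}

/-- In an `n`-subtractive T0 topological algebra, every nonzero `a` lies in
`Σ (κ a)` where `κ a` is its rank; consequently `Σ (n-1) = A \ {0}`. -/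
theorem sigma_rank_membership {A : Type*} [TopologicalSpace A] [T0Space A]
    (n : ℕ) (hn : 2 ≤ n)
    (s : ℕ → A → A → A) (z : A)
    (h1 : ∀ x, s 1 x x = z)
    (h2 : ∀ i, 1 ≤ i → i ≤ n - 2 → ∀ x, s i x z = s (i + 1) x x)
    (h3 : ∀ x, s (n - 1) x z = x)
    (hcont : ∀ i, 1 ≤ i → i ≤ n - 1 → Continuous (fun p : A × A => s i p.1 p.2)) :
    (∀ a : A, a ≠ z → ∀ k, 1 ≤ k → k ≤ n - 1 → s k a z ≠ z →
      (∀ j, 1 ≤ j → j < k → s j a z = z) → a ∈ sigmaSet s z k) ∧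
    sigmaSet s z (n - 1) = {z}ᶜ := by
  -- s i z z = z for all 1 ≤ i ≤ n-1
  have hszz : ∀ i, 1 ≤ i → i ≤ n - 1 → s i z z = z := by
    intro i hi1
    induction i with
    | zero => omega
    | succ m ih =>
      intro him
      rcases Nat.eq_or_lt_of_le hi1 with h | h
      · simp [← h, h1]
      · have hm1 : 1 ≤ m := by omega
        have hm2 : m ≤ n - 2 := by omega
        rw [← h2 m hm1 hm2 z]
        exact ih hm1 (by omega)
  -- z is a closed point: if z ⤳ c then c = z
  have hT1 : ∀ c : A, z ⤳ c → c = z := by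
    intro c hzc
    have key : ∀ i, 1 ≤ i → i ≤ n - 1 → s i c z ⤳ z := by
      intro i hi1
      induction i with
      | zero => omega
      | succ m ih =>
        intro him
        have hstep : s (m + 1) c z ⤳ s (m + 1) c c := by
          have : (c, z) ⤳ (c, c) := Specializes.prod specializes_rfl hzc
          exact this.map (hcont (m + 1) (by omega) him)
        rcases Nat.eq_or_lt_of_le hi1 with h | h
        · have : s (m + 1) c c = z := by rw [← h]; exact h1 c
          rwa [this] at hstep
        · have hm1 : 1 ≤ m := by omega
          have hm2 : m ≤ n - 2 := by omega
          have : s (m + 1) c c = s m c z := (h2 m hm1 hm2 c).symm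
          rw [this] at hstep
          exact hstep.trans (ih hm1 (by omega))
    have hc : c ⤳ z := by
      have := key (n - 1) (by omega) le_rfl
      rwa [h3 c] at this
    exact (hc.antisymm hzc).eq
  -- main separation claim
  have main : ∀ a : A, a ≠ z → ∀ k, 1 ≤ k → k ≤ n - 1 → s k a z ≠ z →
      (∀ j, 1 ≤ j → j < k → s j a z = z) → a ∈ sigmaSet s z k := by
    intro a ha k hk1 hkn hks hmin
    -- get open W ∋ s k a z with z ∉ W
    have hnz : ¬ (z ⤳ s k a z) := fun h => hks (hT1 _ h)
    rw [specializes_iff_forall_open] at hnz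
    push_neg at hnz
    obtain ⟨W, hWo, hWm, hWz⟩ := hnz
    -- continuity at (a, z)
    have hc := (hcont k hk1 hkn).isOpen_preimage W hWo
    have hmem : (a, z) ∈ (fun p : A × A => s k p.1 p.2) ⁻¹' W := hWm
    obtain ⟨U, V, hU, hV, haU, hzV, hUV⟩ := isOpen_prod_iff.1 hc a z hmem
    refine ⟨U, V, hU, hV, haU, hzV, ?_⟩
    intro b ⟨hbU, hbV⟩
    have hbb : s k b b ∈ W := hUV (Set.mk_mem_prod hbU hbV)
    have hbbne : s k b b ≠ z := fun h => hWz (h ▸ hbb)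
    rcases Nat.eq_or_lt_of_le hk1 with h | h
    · exact absurd (h ▸ h1 b : s k b b = z) hbbne
    · -- k ≥ 2
      have hk2 : 1 ≤ k - 1 := by omega
      have hk3 : k - 1 ≤ n - 2 := by omega
      have heq : s (k - 1) b z = s k b b := by
        have := h2 (k - 1) hk2 hk3 b
        rwa [Nat.sub_add_cancel (by omega)] at this
      have hne : s (k - 1) b z ≠ z := heq ▸ hbbne
      have hbz : b ≠ z := by
        intro hb
        exact hne (hb ▸ hszz (k - 1) hk2 (by omega))
      -- find minimal rank ≤ k - 1
      have hex : ∃ m, 1 ≤ m ∧ s m b z ≠ z := ⟨k - 1, hk2, hne⟩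
      classical
      obtain ⟨hm1, hms⟩ := Nat.find_spec hex
      refine ⟨hbz, Nat.find hex, hm1, ?_, hms, ?_⟩
      · exact le_trans (Nat.find_le ⟨hk2, hne⟩) (le_refl (k - 1))
      · intro j hj1 hjm
        by_contra hjs
        exact Nat.find_min hex hjm ⟨hj1, hjs⟩
  refine ⟨main, ?_⟩
  ext a
  simp only [Set.mem_compl_iff, Set.mem_singleton_iff]
  constructor
  · rintro ⟨U, V, hU, hV, haU, hzV, hUV⟩ rfl
    exact (hUV ⟨haU, hzV⟩).1 rfl
  · intro ha
    -- a has a rank: least k with s k a z ≠ z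
    classical
    have hex : ∃ m, 1 ≤ m ∧ s m a z ≠ z := ⟨n - 1, by omega, by rw [h3]; exact ha⟩
    set k := Nat.find hex with hkdef
    obtain ⟨hk1, hks⟩ := Nat.find_spec hex
    have hkn : k ≤ n - 1 := Nat.find_le ⟨by omega, by rw [h3]; exact ha⟩
    have hmin : ∀ j, 1 ≤ j → j < k → s j a z = z := by
      intro j hj1 hjk
      by_contra hjs
      exact Nat.find_min hex hjk ⟨hj1, hjs⟩
    obtain ⟨U, V, hU, hV, haU, hzV, hUV⟩ := main a ha k hk1 hkn hks hmin
    exact ⟨U, V, hU, hV, haU, hzV, fun b hb =>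
      let ⟨hbz, m, hm1, hm2, hm3, hm4⟩ := hUV hb
      ⟨hbz, m, hm1, by omega, hm3, hm4⟩⟩
end

section
/- Let (A, τ) be an n-subtractive T0 topological algebra and define Γ₀(0) = ∅ and Γ_{i+1}(0) = {b : ∃ open U ∋ 0 and V ∋ b with U ∩ V ⊆ Γᵢ(0)}. Then Γ_{n-1}(0) = A \ {0}; that is, A is (n−1)-step Hausdorff at the point 0. -/
/-- Coleman's iterated separation sets at the point `z`. -/
def gammaSet {A : Type*} [TopologicalSpace A] (z : A) : ℕ → Set A
  | 0 => ∅
  | (i + 1) => {b | ∃ U V : Set A, IsOpen U ∧ IsOpen V ∧ z ∈ U ∧ b ∈ V ∧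
      U ∩ V ⊆ gammaSet z i}

lemma z_notMem_gammaSet {A : Type*} [TopologicalSpace A] (z : A) :
    ∀ k, z ∉ gammaSet z k := by
  intro k
  induction k with
  | zero => simp [gammaSet]
  | succ k ih =>
    rintro ⟨U, V, _, _, hzU, hzV, hsub⟩
    exact ih (hsub ⟨hzU, hzV⟩)

lemma key_lemma {A : Type*} [TopologicalSpace A]
    (n : ℕ)
    (s : ℕ → A → A → A) (z : A)
    (h1 : ∀ x, s 1 x x = z)
    (h2 : ∀ i, 1 ≤ i → i ≤ n - 2 → ∀ x, s i x z = s (i + 1) x x)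
    (hcont : ∀ i, 1 ≤ i → i ≤ n - 1 → Continuous (fun p : A × A => s i p.1 p.2)) :
    ∀ i, 1 ≤ i → i ≤ n - 1 → ∀ a O, IsOpen O → z ∉ O → s i a z ∈ O →
      a ∈ gammaSet z i := by
  intro i
  induction i with
  | zero => omega
  | succ i ih =>
    intro _ hle a O hO hzO hmem
    have hc := hcont (i + 1) (by omega) hle
    have hpre : IsOpen ((fun p : A × A => s (i + 1) p.1 p.2) ⁻¹' O) :=
      hc.isOpen_preimage O hO
    have hmem' : (a, z) ∈ (fun p : A × A => s (i + 1) p.1 p.2) ⁻¹' O := hmem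
    obtain ⟨V, U, hV, hU, haV, hzU, hsub⟩ :=
      isOpen_prod_iff.mp hpre a z hmem'
    refine ⟨U, V, hU, hV, hzU, haV, ?_⟩
    intro x hx
    have hxx' : (x, x) ∈ (fun p : A × A => s (i + 1) p.1 p.2) ⁻¹' O :=
      hsub ⟨hx.2, hx.1⟩
    have hxx : s (i + 1) x x ∈ O := hxx'
    rcases Nat.eq_zero_or_pos i with h0 | hpos
    · subst h0
      rw [h1 x] at hxx
      exact absurd hxx hzO
    · have hix : s i x z = s (i + 1) x x := h2 i hpos (by omega) x
      exact ih hpos (by omega) x O hO hzO (hix ▸ hxx)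

/-- An `n`-subtractive T0 topological algebra is `(n-1)`-step Hausdorff at `0`:
`Γ (n-1) 0 = A \ {0}`. -/
theorem n_subtractive_step_hausdorff {A : Type*} [TopologicalSpace A] [T0Space A]
    (n : ℕ) (hn : 2 ≤ n)
    (s : ℕ → A → A → A) (z : A)
    (h1 : ∀ x, s 1 x x = z)
    (h2 : ∀ i, 1 ≤ i → i ≤ n - 2 → ∀ x, s i x z = s (i + 1) x x)
    (h3 : ∀ x, s (n - 1) x z = x)
    (hcont : ∀ i, 1 ≤ i → i ≤ n - 1 → Continuous (fun p : A × A => s i p.1 p.2)) :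
    gammaSet z (n - 1) = {z}ᶜ := by
  have hn1 : 1 ≤ n - 1 := by omega
  ext a
  simp only [Set.mem_compl_iff, Set.mem_singleton_iff]
  constructor
  · intro ha haz
    subst haz
    exact z_notMem_gammaSet a (n - 1) ha
  · intro ha
    -- main claim: from an open set containing a but not z, we may conclude
    have main : ∀ O : Set A, IsOpen O → a ∈ O → z ∉ O → a ∈ gammaSet z (n - 1) := by
      intro O hO haO hzO
      have : s (n - 1) a z ∈ O := by rw [h3 a]; exact haO
      exact key_lemma n s z h1 h2 hcont (n - 1) hn1 le_rfl a O hO hzO this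
    obtain ⟨O, hO, hxor⟩ := exists_isOpen_xor'_mem ha
    rcases hxor with ⟨haO, hzO⟩ | ⟨hzO, haO⟩
    · exact main O hO haO hzO
    · -- z ∈ O, a ∉ O : find i with s i a a ∈ O and s i a z ∉ O
      have hchain : ∃ i, 1 ≤ i ∧ i ≤ n - 1 ∧ s i a a ∈ O ∧ s i a z ∉ O := by
        by_contra hcon
        push_neg at hcon
        -- then by induction the whole chain stays in O, contradicting a ∉ O
        have step : ∀ j, j ≤ n - 1 →
            (if j = 0 then z else s j a z) ∈ O := by
          intro j
          induction j with
          | zero => intro _; simpa using hzO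
          | succ j ihj =>
            intro hj
            have hprev := ihj (by omega)
            have haa : s (j + 1) a a ∈ O := by
              rcases Nat.eq_zero_or_pos j with h0 | hpos
              · subst h0
                rw [h1 a]
                simpa using hprev
              · have := h2 j hpos (by omega) a
                rw [← this]
                simpa [Nat.pos_iff_ne_zero.mp hpos] using hprev
            have := hcon (j + 1) (by omega) hj haa
            simpa using this
        have := step (n - 1) le_rfl
        rw [if_neg (by omega)] at this
        rw [h3 a] at this
        exact haO this
      obtain ⟨i, hi1, hi2, hiaa, hiaz⟩ := hchain
      -- use the open set (s i a ·)⁻¹ O, which contains a but not z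
      have hcO : Continuous (fun x : A => s i a x) := by
        have := hcont i hi1 hi2
        exact this.comp (Continuous.prodMk continuous_const continuous_id)
      have hU : IsOpen ((fun x : A => s i a x) ⁻¹' O) := hcO.isOpen_preimage O hO
      exact main _ hU hiaa hiaz
end

section
/- Let A be an algebra of some signature possessing, for some n ≥ 2, ternary term operations p₁, …, p_{n-1} satisfying x = p₁(x,y,y), pᵢ(x,x,y) = p_{i+1}(x,y,y) for 1 ≤ i ≤ n−2, and p_{n-1}(x,x,y) = y (Mal'cev conditions for n-permutability). Then every compatible preorder ≤ on A is symmetric: a ≤ b implies b ≤ a. -/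
/-- In an algebra with Mal'cev operations `p 1, …, p (n-1)` witnessing
`n`-permutability, every compatible preorder is symmetric. -/
theorem malcev_preorder_symmetric {A : Type*} (n : ℕ) (hn : 2 ≤ n)
    (p : ℕ → A → A → A → A)
    (h1 : ∀ x y : A, x = p 1 x y y)
    (h2 : ∀ i, 1 ≤ i → i ≤ n - 2 → ∀ x y : A, p i x x y = p (i + 1) x y y)
    (h3 : ∀ x y : A, p (n - 1) x x y = y)
    (le : A → A → Prop)
    (hrefl : ∀ a, le a a)
    (htrans : ∀ a b c, le a b → le b c → le a c)
    (hmono : ∀ i, 1 ≤ i → i ≤ n - 1 →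
      ∀ a b c a' b' c', le a a' → le b b' → le c c' →
        le (p i a b c) (p i a' b' c')) :
    ∀ a b, le a b → le b a := by
  intro a b hab
  have key : ∀ i, 1 ≤ i → i ≤ n - 1 → le (p i a b b) a := by
    intro i
    induction i with
    | zero => intro h; omega
    | succ j ih =>
      intro _ hle
      rcases Nat.eq_zero_or_pos j with hj | hj
      · subst hj
        rw [← h1 a b]; exact hrefl a
      · have hj2 : j ≤ n - 2 := by omega
        have hstep : p (j + 1) a b b = p j a a b := (h2 j hj hj2 a b).symm
        rw [hstep]
        have hm : le (p j a a b) (p j a b b) :=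
          hmono j hj (by omega) a a b a b b (hrefl a) hab (hrefl b)
        exact htrans _ _ _ hm (ih hj (by omega))
  have hb : b = p (n - 1) a a b := (h3 a b).symm
  have hm : le (p (n - 1) a a b) (p (n - 1) a b b) :=
    hmono (n - 1) (by omega) (by omega) a a b a b b (hrefl a) hab (hrefl b)
  rw [hb]
  exact htrans _ _ _ hm (key (n - 1) (by omega) (by omega))
end

section
/- Let (A, s, 0) be a subtractive algebra (s(x,x) = 0, s(x,0) = x) and ≤ a compatible partial order on A. Then every connected component of the poset (A, ≤) containing 0 is the singleton {0}; i.e., the equivalence class of 0 under the least equivalence relation containing ≤ is {0}. -/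
/-- In a subtractive algebra with a compatible partial order, the connected
component of `0` (its class under the least equivalence relation containing `≤`)
is the singleton `{0}`. -/
theorem subtractive_component_of_zero {A : Type*} [PartialOrder A]
    (s : A → A → A) (z : A)
    (h1 : ∀ x, s x x = z) (h2 : ∀ x, s x z = x)
    (mono : ∀ a b a' b', a ≤ b → a' ≤ b' → s a a' ≤ s b b') :
    {a : A | Relation.EqvGen (· ≤ ·) z a} = {z} := by
  have up : ∀ a : A, z ≤ a → a = z := by
    intro a h
    have : s a z ≤ s a a := mono a a z a le_rfl h
    rw [h2, h1] at this
    exact le_antisymm this h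
  have down : ∀ a : A, a ≤ z → a = z := by
    intro a h
    have : s a a ≤ s a z := mono a a a z le_rfl h
    rw [h2, h1] at this
    exact le_antisymm h this
  have key : ∀ a b : A, Relation.EqvGen (· ≤ ·) a b → (a = z ↔ b = z) := by
    intro a b h
    induction h with
    | rel x y hxy =>
        constructor
        · intro hx; exact up y (hx ▸ hxy)
        · intro hy; exact down x (hy ▸ hxy)
    | refl x => exact Iff.rfl
    | symm x y _ ih => exact ih.symm
    | trans x y w _ _ ih1 ih2 => exact ih1.trans ih2
  ext a
  simp only [Set.mem_setOf_eq, Set.mem_singleton_iff]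
  constructor
  · intro h; exact (key z a h).mp rfl
  · rintro rfl; exact Relation.EqvGen.refl _
end
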